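/- If F is submodular with F(∅)=F(V)=0, then for every w ∈ ℝ^p, f(w) = max_{s ∈ B(F)} ⟨w, s⟩, where B(F) = {s ∈ ℝ^p : ∀A ⊆ V, s(A) ≤ F(A), s(V) = F(V)} is the base polyhedron; in particular f is convex. -/

import Mathlib

open MeasureTheory Finset

/-- Submodularity of a set function on the power set of `Fin p`. -/
def Submodular {p : ℕ} (F : Finset (Fin p) → ℝ) : Prop :=
  ∀ A B : Finset (Fin p), F (A ∪ B) + F (A ∩ B) ≤ F A + F B

/-- The Lovász extension `f(w) = ∫_ℝ F({i : w i ≥ α}) dα`. -/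
noncomputable def lovasz {p : ℕ} (F : Finset (Fin p) → ℝ) (w : Fin p → ℝ) : ℝ :=
  ∫ α : ℝ, F (Finset.univ.filter (fun i => α ≤ w i))

/-- The base polyhedron `B(F)`. -/
def basePolyhedron {p : ℕ} (F : Finset (Fin p) → ℝ) : Set (Fin p → ℝ) :=
  {s | (∀ A : Finset (Fin p), ∑ k ∈ A, s k ≤ F A) ∧ ∑ k, s k = F Finset.univ}

lemma abel_aux (d g : ℕ → ℝ) (n : ℕ) :
    ∑ k ∈ range n, d k * (g (k+1) - g k)
      = d (n-1) * g n - d 0 * g 0 + ∑ m ∈ Ico 1 n, (d (m-1) - d m) * g m := by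
  induction n with
  | zero => simp
  | succ n ih =>
    rcases Nat.eq_zero_or_pos n with rfl | hn
    · simp [Finset.sum_range_succ]; ring
    · rw [Finset.sum_range_succ, ih, Finset.sum_Ico_succ_top hn, Nat.add_sub_cancel]; ring

lemma key_greatest {p : ℕ} (F : Finset (Fin p) → ℝ) (hsub : Submodular F) (h0 : F ∅ = 0)
    (hV : F Finset.univ = 0) (w : Fin p → ℝ) :
    IsGreatest {x : ℝ | ∃ s ∈ basePolyhedron F, x = ∑ i, w i * s i} (lovasz F w) := by
  classical
  set τ : Equiv.Perm (Fin p) := Tuple.sort (fun i => -w i) with hτ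
  have hmono : Monotone ((fun i => -w i) ∘ τ) := Tuple.monotone_sort _
  have hanti : ∀ k m : Fin p, k ≤ m → w (τ m) ≤ w (τ k) := by
    intro k m h
    have := hmono h
    simpa using this
  set d : ℕ → ℝ := fun k => if h : k < p then w (τ ⟨k, h⟩) else 0 with hd_def
  have hd : ∀ k m : ℕ, k ≤ m → m < p → d m ≤ d k := by
    intro k m hkm hm
    have hk : k < p := lt_of_le_of_lt hkm hm
    simp only [hd_def, dif_pos hk, dif_pos hm]
    exact hanti ⟨k, hk⟩ ⟨m, hm⟩ hkm
  set U : ℕ → Finset (Fin p) := fun m => univ.filter (fun i => (τ.symm i : ℕ) < m) with hU_def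
  have hU0 : U 0 = ∅ := by simp [hU_def]
  have hUp : ∀ m, p ≤ m → U m = univ := by
    intro m hm; ext i; simp only [hU_def, mem_filter, mem_univ, true_and, iff_true]
    exact lt_of_lt_of_le (τ.symm i).isLt hm
  have hUins : ∀ k : ℕ, (hk : k < p) → U (k+1) = insert (τ ⟨k, hk⟩) (U k) := by
    intro k hk; ext i
    simp only [hU_def, mem_filter, mem_univ, true_and, mem_insert, Nat.lt_succ_iff_lt_or_eq]
    have heq : i = τ ⟨k, hk⟩ ↔ ((τ.symm i : ℕ) = k) := by
      rw [← Equiv.symm_apply_eq, Fin.ext_iff]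
    tauto
  have hnotmem : ∀ k : ℕ, (hk : k < p) → τ ⟨k, hk⟩ ∉ U k := by
    intro k hk; simp [hU_def]
  -- the target value
  set L : ℝ := ∑ m ∈ Ico 1 p, (d (m-1) - d m) * F (U m) with hL_def
  -- pointwise description of the integrand
  have hindic : ∀ α : ℝ, F (univ.filter fun i => α ≤ w i)
      = ∑ m ∈ Ico 1 p, (Set.Ioc (d m) (d (m-1))).indicator (fun _ => F (U m)) α := by
    intro α
    set B : Finset (Fin p) := univ.filter (fun k => α ≤ w (τ k)) with hB
    set n : ℕ := B.card with hn
    have hnp : n ≤ p := by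
      have := Finset.card_le_univ B
      simpa [hn] using this
    have hBmem : ∀ k : Fin p, k ∈ B ↔ (k : ℕ) < n := by
      intro k
      constructor
      · intro hk
        by_contra hlt
        push_neg at hlt
        have hsub2 : Finset.Iic k ⊆ B := by
          intro j hj
          simp only [Finset.mem_Iic] at hj
          simp only [hB, mem_filter, mem_univ, true_and] at hk ⊢
          exact le_trans hk (hanti j k hj)
        have := Finset.card_le_card hsub2
        rw [Fin.card_Iic] at this
        omega
      · intro hk
        by_contra hmem
        have hsub2 : B ⊆ Finset.Iio k := by
          intro j hj
          simp only [Finset.mem_Iio]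
          by_contra hle
          push_neg at hle
          refine hmem ?_
          simp only [hB, mem_filter, mem_univ, true_and] at hj ⊢
          exact le_trans hj (hanti k j hle)
        have := Finset.card_le_card hsub2
        rw [Fin.card_Iio] at this
        omega
    have hdmem : ∀ k : ℕ, k < p → (α ≤ d k ↔ k < n) := by
      intro k hk
      have h1 := hBmem ⟨k, hk⟩
      simp only [hB, mem_filter, mem_univ, true_and] at h1
      simpa only [hd_def, dif_pos hk] using h1
    have hAU : (univ.filter fun i => α ≤ w i) = U n := by
      ext i
      simp only [hU_def, mem_filter, mem_univ, true_and]
      have := hBmem (τ.symm i)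
      simp only [hB, mem_filter, mem_univ, true_and, Equiv.apply_symm_apply] at this
      exact this
    rw [hAU]
    have hterm : ∀ m ∈ Ico 1 p, (Set.Ioc (d m) (d (m-1))).indicator (fun _ => F (U m)) α
        = if m = n then F (U m) else 0 := by
      intro m hm
      rw [Finset.mem_Ico] at hm
      rw [Set.indicator_apply]
      have h1 : (α ∈ Set.Ioc (d m) (d (m-1))) ↔ m = n := by
        rw [Set.mem_Ioc]
        have e1 := hdmem m hm.2
        have e2 := hdmem (m-1) (by omega)
        constructor
        · rintro ⟨hlo, hhi⟩
          rw [e2] at hhi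
          have h3 : ¬ (α ≤ d m) := not_le.mpr hlo
          rw [e1] at h3
          omega
        · rintro rfl
          constructor
          · rw [← not_le, e1]; omega
          · rw [e2]; omega
      simp only [h1]
    rw [Finset.sum_congr rfl hterm, Finset.sum_ite_eq' (Ico 1 p) n (fun m => F (U m))]
    by_cases hmem : n ∈ Ico 1 p
    · simp [hmem]
    · rw [if_neg hmem]
      rw [Finset.mem_Ico] at hmem
      push_neg at hmem
      rcases Nat.eq_zero_or_pos n with h | h
      · rw [h, hU0, h0]
      · have h2 : n = p := le_antisymm hnp (hmem h)
        rw [h2, hUp p le_rfl, hV]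
  -- compute the Lovász extension
  have hL : lovasz F w = L := by
    have hint : ∀ m ∈ Ico 1 p,
        Integrable ((Set.Ioc (d m) (d (m-1))).indicator (fun _ => F (U m))) := by
      intro m hm
      rw [integrable_indicator_iff measurableSet_Ioc]
      exact (integrableOn_const_iff (by finiteness)).mpr (Or.inr measure_Ioc_lt_top)
    calc lovasz F w
        = ∫ α : ℝ, ∑ m ∈ Ico 1 p, (Set.Ioc (d m) (d (m-1))).indicator (fun _ => F (U m)) α := by
          unfold lovasz; congr 1; funext α; exact hindic α
      _ = ∑ m ∈ Ico 1 p, ∫ α : ℝ, (Set.Ioc (d m) (d (m-1))).indicator (fun _ => F (U m)) α :=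
          integral_finset_sum _ hint
      _ = L := by
          apply Finset.sum_congr rfl
          intro m hm
          rw [Finset.mem_Ico] at hm
          rw [integral_indicator_const _ measurableSet_Ioc,
            Real.volume_real_Ioc_of_le (hd (m-1) m (by omega) hm.2), smul_eq_mul]
  -- main reindexing identity
  have hmain : ∀ s : Fin p → ℝ, (∑ i, s i = 0) →
      ∑ i, w i * s i = ∑ m ∈ Ico 1 p, (d (m-1) - d m) * ∑ i ∈ U m, s i := by
    intro s hsV
    have h1 : ∑ i, w i * s i = ∑ k : Fin p, w (τ k) * s (τ k) :=
      (Equiv.sum_comp τ fun i => w i * s i).symm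
    have h2 : ∀ k : Fin p, w (τ k) * s (τ k)
        = d (k:ℕ) * ((∑ i ∈ U ((k:ℕ)+1), s i) - ∑ i ∈ U (k:ℕ), s i) := by
      intro k
      have hk := k.isLt
      rw [hUins (k:ℕ) hk, Finset.sum_insert (hnotmem (k:ℕ) hk)]
      simp only [hd_def, dif_pos hk, Fin.eta]
      ring
    rw [h1, Finset.sum_congr rfl (fun k _ => h2 k),
      Fin.sum_univ_eq_sum_range (fun k => d k * ((∑ i ∈ U (k+1), s i) - ∑ i ∈ U k, s i)) p,
      abel_aux d (fun m => ∑ i ∈ U m, s i) p]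
    rw [hU0, hUp p le_rfl]
    simp [hsV]
  -- the greedy vector
  set s₀ : Fin p → ℝ := fun i => F (U ((τ.symm i : ℕ) + 1)) - F (U (τ.symm i : ℕ)) with hs₀
  have hpartial : ∀ m, m ≤ p → ∑ i ∈ U m, s₀ i = F (U m) := by
    intro m
    induction m with
    | zero => intro _; simp [hU0, h0]
    | succ m ihm =>
      intro hm1
      have hm : m < p := hm1
      have h3 : s₀ (τ ⟨m, hm⟩) = F (U (m+1)) - F (U m) := by
        simp [hs₀]
      rw [hUins m hm, Finset.sum_insert (hnotmem m hm), ihm (le_of_lt hm), h3, ← hUins m hm]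
      ring
  have hs₀univ : ∑ k, s₀ k = F Finset.univ := by
    have := hpartial p le_rfl
    rwa [hUp p le_rfl] at this
  have hs₀V : ∑ i, s₀ i = 0 := by rw [hs₀univ, hV]
  have hs₀A : ∀ A : Finset (Fin p), ∑ k ∈ A, s₀ k ≤ F A := by
    intro A
    induction A using Finset.strongInduction with
    | _ A ih =>
      rcases A.eq_empty_or_nonempty with rfl | hne
      · simp [h0]
      · have hne' : (A.image (fun i => τ.symm i)).Nonempty := hne.image _
        set k : Fin p := (A.image (fun i => τ.symm i)).max' hne' with hk
        have hkmax : ∀ i ∈ A, τ.symm i ≤ k := fun i hi =>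
          Finset.le_max' _ _ (Finset.mem_image_of_mem _ hi)
        have hkA : τ k ∈ A := by
          obtain ⟨i, hi, hik⟩ := Finset.mem_image.mp (Finset.max'_mem _ hne')
          have hik' : (τ.symm i : Fin p) = k := by rw [hik, hk]
          rw [← hik', Equiv.apply_symm_apply]; exact hi
        have hAsubU : A ⊆ U ((k:ℕ)+1) := by
          intro i hi
          simp only [hU_def, mem_filter, mem_univ, true_and]
          exact Nat.lt_succ_of_le (hkmax i hi)
        have hUnion : A ∪ U (k:ℕ) = U ((k:ℕ)+1) := by
          apply Finset.Subset.antisymm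
          · apply Finset.union_subset hAsubU
            intro i hi
            simp only [hU_def, mem_filter, mem_univ, true_and] at hi ⊢
            omega
          · rw [hUins (k:ℕ) k.isLt]
            intro i hi
            rcases Finset.mem_insert.mp hi with h | h
            · rw [h]
              apply Finset.mem_union_left
              simpa [Fin.eta] using hkA
            · exact Finset.mem_union_right _ h
        have hInter : A ∩ U (k:ℕ) = A.erase (τ k) := by
          ext i
          simp only [Finset.mem_inter, Finset.mem_erase, hU_def, mem_filter, mem_univ, true_and]
          constructor
          · rintro ⟨hiA, hlt⟩
            refine ⟨fun hik => ?_, hiA⟩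
            rw [hik] at hlt
            simp at hlt
          · rintro ⟨hik, hiA⟩
            refine ⟨hiA, ?_⟩
            have hle := hkmax i hiA
            have hne2 : τ.symm i ≠ k := fun h => hik (by rw [← h, Equiv.apply_symm_apply])
            exact Fin.lt_iff_val_lt_val.mp (lt_of_le_of_ne hle hne2)
        have hsubm := hsub A (U (k:ℕ))
        rw [hUnion, hInter] at hsubm
        have hih := ih (A.erase (τ k)) (Finset.erase_ssubset hkA)
        have hsum : ∑ x ∈ A, s₀ x = ∑ x ∈ A.erase (τ k), s₀ x + s₀ (τ k) :=
          (Finset.sum_erase_add A s₀ hkA).symm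
        have hs₀k : s₀ (τ k) = F (U ((k:ℕ)+1)) - F (U (k:ℕ)) := by
          simp [hs₀]
        rw [hsum, hs₀k]
        linarith
  constructor
  · refine ⟨s₀, ⟨hs₀A, hs₀univ⟩, ?_⟩
    rw [hL, hmain s₀ hs₀V, hL_def]
    apply Finset.sum_congr rfl
    intro m hm
    rw [Finset.mem_Ico] at hm
    rw [hpartial m (le_of_lt hm.2)]
  · rintro x ⟨s, ⟨hs1, hs2⟩, rfl⟩
    rw [hL, hL_def, hmain s (by rw [hs2, hV])]
    apply Finset.sum_le_sum
    intro m hm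
    rw [Finset.mem_Ico] at hm
    exact mul_le_mul_of_nonneg_left (hs1 (U m)) (sub_nonneg.mpr (hd (m-1) m (by omega) hm.2))

theorem lovasz_eq_max_base {p : ℕ} (F : Finset (Fin p) → ℝ)
    (hsub : Submodular F) (h0 : F ∅ = 0) (hV : F Finset.univ = 0) :
    (∀ w : Fin p → ℝ,
      IsGreatest {x : ℝ | ∃ s ∈ basePolyhedron F, x = ∑ i, w i * s i} (lovasz F w)) ∧
    ConvexOn ℝ Set.univ (lovasz F) := by
  have key := fun w => key_greatest F hsub h0 hV w
  refine ⟨key, convex_univ, ?_⟩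
  intro u _ v _ a b ha hb hab
  obtain ⟨s, hsB, hval⟩ := (key (a • u + b • v)).1
  rw [hval]
  have h1 : (∑ i, u i * s i) ≤ lovasz F u := (key u).2 ⟨s, hsB, rfl⟩
  have h2 : (∑ i, v i * s i) ≤ lovasz F v := (key v).2 ⟨s, hsB, rfl⟩
  have h3 : ∑ i, (a • u + b • v) i * s i = a * ∑ i, u i * s i + b * ∑ i, v i * s i := by
    rw [Finset.mul_sum, Finset.mul_sum, ← Finset.sum_add_distrib]
    apply Finset.sum_congr rfl
    intro i _
    simp only [Pi.add_apply, Pi.smul_apply, smul_eq_mul]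
    ring
  rw [h3]
  have h4 := add_le_add (mul_le_mul_of_nonneg_left h1 ha) (mul_le_mul_of_nonneg_left h2 hb)
  simpa [smul_eq_mul] using h4
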